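/- For any function u in H^1_0 of a domain in R^2, the L^4 norm of u is bounded by 2^{1/4} times the square root of the L^2 norm of u times the square root of the L^2 norm of the gradient of u. -/

import Mathlib

open MeasureTheory Set Topology
open scoped ENNReal NNReal

noncomputable section LadyAux

/-- The canonical linear equivalence `ℝ × ℝ ≃ EuclideanSpace ℝ (Fin 2)`. -/
def phiE : (ℝ × ℝ) ≃L[ℝ] EuclideanSpace ℝ (Fin 2) :=
  (ContinuousLinearEquiv.finTwoArrow ℝ ℝ).symm.trans
    (PiLp.continuousLinearEquiv 2 ℝ (fun _ : Fin 2 => ℝ)).symm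

lemma phiE_apply (p : ℝ × ℝ) (i : Fin 2) : phiE p i = ![p.1, p.2] i := rfl

lemma phiE_mp : MeasurePreserving (phiE : ℝ × ℝ → EuclideanSpace ℝ (Fin 2)) volume volume := by
  have h := (PiLp.volume_preserving_toLp (Fin 2)).comp
    (volume_preserving_finTwoArrow ℝ).symm
  exact h

lemma phiE_e0 : phiE (1, 0) = EuclideanSpace.single (0 : Fin 2) (1 : ℝ) := by
  apply PiLp.ext
  intro i
  rw [phiE_apply]
  fin_cases i <;> simp [EuclideanSpace.single_apply]

lemma phiE_e1 : phiE (0, 1) = EuclideanSpace.single (1 : Fin 2) (1 : ℝ) := by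
  apply PiLp.ext
  intro i
  rw [phiE_apply]
  fin_cases i <;> simp [EuclideanSpace.single_apply]

lemma fderiv_normsq_apply (u : EuclideanSpace ℝ (Fin 2) → EuclideanSpace ℝ (Fin 2))
    (hu : ContDiff ℝ 1 u) (z ξ : EuclideanSpace ℝ (Fin 2)) :
    fderiv ℝ (fun y => ‖u y‖ ^ 2) z ξ = 2 * (inner ℝ (u z) (fderiv ℝ u z ξ) : ℝ) := by
  have hd : DifferentiableAt ℝ u z := hu.differentiable one_ne_zero z
  have : (fun y => ‖u y‖ ^ 2) = fun y => (inner ℝ (u y) (u y) : ℝ) := by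
    funext y; rw [real_inner_self_eq_norm_sq]
  rw [this, fderiv_inner_apply ℝ hd hd]
  rw [real_inner_comm (fderiv ℝ u z ξ) (u z)]
  ring

lemma pointwise_bound (u : EuclideanSpace ℝ (Fin 2) → EuclideanSpace ℝ (Fin 2))
    (hu : ContDiff ℝ 1 u) (z : EuclideanSpace ℝ (Fin 2)) :
    (fderiv ℝ (fun y => ‖u y‖ ^ 2) z (EuclideanSpace.single 0 1)) ^ 2 +
    (fderiv ℝ (fun y => ‖u y‖ ^ 2) z (EuclideanSpace.single 1 1)) ^ 2 ≤
    (2 * ‖u z‖ * ‖fderiv ℝ u z‖) ^ 2 := by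
  set A := fderiv ℝ u z with hA
  set B := ContinuousLinearMap.adjoint A with hB
  have key : ∀ i : Fin 2, fderiv ℝ (fun y => ‖u y‖ ^ 2) z (EuclideanSpace.single i 1)
      = 2 * B (u z) i := by
    intro i
    rw [fderiv_normsq_apply u hu]
    congr 1
    rw [← hA, hB]
    rw [← ContinuousLinearMap.adjoint_inner_left A (EuclideanSpace.single i 1) (u z)]
    rw [real_inner_comm]
    simp [EuclideanSpace.inner_single_right, EuclideanSpace.inner_single_left]
  rw [key 0, key 1]
  have h1 : (B (u z) 0) ^ 2 + (B (u z) 1) ^ 2 = ‖B (u z)‖ ^ 2 := by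
    rw [EuclideanSpace.norm_eq]
    rw [Real.sq_sqrt (by positivity)]
    simp [Fin.sum_univ_two, sq_abs]
  have h2 : ‖B (u z)‖ ≤ ‖A‖ * ‖u z‖ := by
    have h3 := B.le_opNorm (u z)
    have hBA : ‖B‖ = ‖A‖ := by
      rw [hB]; exact ContinuousLinearMap.adjoint.norm_map A
    linarith [h3, hBA ▸ h3]
  nlinarith [norm_nonneg (u z), norm_nonneg A, norm_nonneg (B (u z)),
    sq_nonneg (B (u z) 0), sq_nonneg (B (u z) 1)]

lemma ftc_left (v : ℝ × ℝ → ℝ) (hv : ContDiff ℝ 1 v) (hsupp : HasCompactSupport v) (a b : ℝ) :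
    (‖v (a, b)‖₊ : ℝ≥0∞) ≤ ∫⁻ t, ‖fderiv ℝ v (t, b) (1, 0)‖₊ := by
  have hemb : IsClosedEmbedding (fun t : ℝ => ((t, b) : ℝ × ℝ)) :=
    Isometry.isClosedEmbedding (Isometry.of_dist_eq
      (fun x y => by simp [Prod.dist_eq, dist_nonneg]))
  have h1 : ContDiff ℝ 1 (fun t : ℝ => v (t, b)) :=
    hv.comp (contDiff_id.prodMk contDiff_const)
  have h2 : HasCompactSupport (fun t : ℝ => v (t, b)) :=
    hsupp.comp_isClosedEmbedding hemb
  refine le_trans (HasCompactSupport.enorm_le_lintegral_Ici_deriv h1 h2 a) ?_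
  refine le_trans (lintegral_mono' Measure.restrict_le_self le_rfl) ?_
  apply lintegral_mono
  intro t
  have hd : HasDerivAt (fun t : ℝ => v (t, b)) (fderiv ℝ v (t, b) (1, 0)) t := by
    have hp : HasDerivAt (fun t : ℝ => ((t, b) : ℝ × ℝ)) (1, 0) t :=
      (hasDerivAt_id t).prodMk (hasDerivAt_const t b)
    exact ((hv.differentiable one_ne_zero (t, b)).hasFDerivAt).comp_hasDerivAt t hp
  simp only []
  rw [hd.deriv]
  exact le_rfl

lemma ftc_right (v : ℝ × ℝ → ℝ) (hv : ContDiff ℝ 1 v) (hsupp : HasCompactSupport v) (a b : ℝ) :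
    (‖v (a, b)‖₊ : ℝ≥0∞) ≤ ∫⁻ t, ‖fderiv ℝ v (a, t) (0, 1)‖₊ := by
  have hemb : IsClosedEmbedding (fun t : ℝ => ((a, t) : ℝ × ℝ)) :=
    Isometry.isClosedEmbedding (Isometry.of_dist_eq
      (fun x y => by simp [Prod.dist_eq, dist_nonneg]))
  have h1 : ContDiff ℝ 1 (fun t : ℝ => v (a, t)) :=
    hv.comp (contDiff_const.prodMk contDiff_id)
  have h2 : HasCompactSupport (fun t : ℝ => v (a, t)) :=
    hsupp.comp_isClosedEmbedding hemb
  refine le_trans (HasCompactSupport.enorm_le_lintegral_Ici_deriv h1 h2 b) ?_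
  refine le_trans (lintegral_mono' Measure.restrict_le_self le_rfl) ?_
  apply lintegral_mono
  intro t
  have hd : HasDerivAt (fun t : ℝ => v (a, t)) (fderiv ℝ v (a, t) (0, 1)) t := by
    have hp : HasDerivAt (fun t : ℝ => ((a, t) : ℝ × ℝ)) (0, 1) t :=
      (hasDerivAt_const t a).prodMk (hasDerivAt_id t)
    exact ((hv.differentiable one_ne_zero (a, t)).hasFDerivAt).comp_hasDerivAt t hp
  simp only []
  rw [hd.deriv]
  exact le_rfl

lemma nnreal_cs (a b c d X Y : ℝ≥0) (h1 : a ^ 2 + b ^ 2 ≤ X ^ 2) (h2 : c ^ 2 + d ^ 2 ≤ Y ^ 2) :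
    a * d + b * c ≤ X * Y := by
  rw [← NNReal.coe_le_coe] at *
  push_cast at *
  have key : ((a : ℝ) * d + b * c) ^ 2 ≤ ((X : ℝ) * Y) ^ 2 := by
    have h3 : ((a : ℝ) * d + b * c) ^ 2 ≤ ((a : ℝ) ^ 2 + b ^ 2) * ((c : ℝ) ^ 2 + d ^ 2) := by
      nlinarith [sq_nonneg ((a : ℝ) * c - b * d)]
    have h4 : ((a : ℝ) ^ 2 + b ^ 2) * ((c : ℝ) ^ 2 + d ^ 2) ≤ (X : ℝ) ^ 2 * (Y : ℝ) ^ 2 := by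
      have := mul_le_mul h1 h2 (by positivity) (by positivity)
      linarith
    nlinarith
  have h5 : (0 : ℝ) ≤ (a : ℝ) * d + b * c := by positivity
  have h6 : (0 : ℝ) ≤ (X : ℝ) * Y := by positivity
  exact (pow_le_pow_iff_left₀ h5 h6 (by norm_num)).mp key


/-- Core inequality: `∫ ‖u‖⁴ ≤ 2 (∫ ‖u‖²) (∫ ‖Du‖²)`. -/
lemma ladyzhenskaya_core (u : EuclideanSpace ℝ (Fin 2) → EuclideanSpace ℝ (Fin 2))
    (hu : ContDiff ℝ 1 u) (hsupp : HasCompactSupport u) :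
    ∫⁻ x, (‖u x‖₊ : ℝ≥0∞) ^ 4 ≤
      2 * (∫⁻ x, (‖u x‖₊ : ℝ≥0∞) ^ 2) * (∫⁻ x, (‖fderiv ℝ u x‖₊ : ℝ≥0∞) ^ 2) := by
  have hucont : Continuous u := hu.continuous
  have hDcont : Continuous (fderiv ℝ u) := hu.continuous_fderiv one_ne_zero
  set I2 := ∫⁻ x, (‖u x‖₊ : ℝ≥0∞) ^ 2 with hI2_def
  set J2 := ∫⁻ x, (‖fderiv ℝ u x‖₊ : ℝ≥0∞) ^ 2 with hJ2_def
  have hw : ContDiff ℝ 1 (fun z : EuclideanSpace ℝ (Fin 2) => ‖u z‖ ^ 2) :=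
    hu.norm_sq (𝕜 := ℝ)
  have hwsupp : HasCompactSupport (fun z : EuclideanSpace ℝ (Fin 2) => ‖u z‖ ^ 2) := by
    have heq : (fun z : EuclideanSpace ℝ (Fin 2) => ‖u z‖ ^ 2)
        = (fun y : EuclideanSpace ℝ (Fin 2) => ‖y‖ ^ 2) ∘ u := rfl
    rw [heq]
    exact hsupp.comp_left (by simp)
  set v : ℝ × ℝ → ℝ := fun p => ‖u (phiE p)‖ ^ 2 with hv_def
  have hv : ContDiff ℝ 1 v := hw.comp phiE.contDiff
  have hvsupp : HasCompactSupport v := hwsupp.comp_homeomorph phiE.toHomeomorph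
  -- chain rule
  have hfvd : ∀ (p ξ : ℝ × ℝ),
      fderiv ℝ v p ξ = fderiv ℝ (fun z => ‖u z‖ ^ 2) (phiE p) (phiE ξ) := by
    intro p ξ
    have hcomp : fderiv ℝ v p
        = (fderiv ℝ (fun z : EuclideanSpace ℝ (Fin 2) => ‖u z‖ ^ 2) (phiE p)).comp
            ((phiE : (ℝ × ℝ) ≃L[ℝ] EuclideanSpace ℝ (Fin 2)) :
              (ℝ × ℝ) →L[ℝ] EuclideanSpace ℝ (Fin 2)) := by
      have h1 := fderiv_comp p (hw.differentiable one_ne_zero (phiE p)) phiE.differentiableAt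
      rw [hv_def]
      rw [show (fun p : ℝ × ℝ => ‖u (phiE p)‖ ^ 2)
        = (fun z : EuclideanSpace ℝ (Fin 2) => ‖u z‖ ^ 2) ∘ (phiE : ℝ × ℝ → _) from rfl]
      rw [h1, phiE.fderiv]
    rw [hcomp]
    rfl
  -- the three auxiliary scalar functions
  set g0 : ℝ × ℝ → ℝ≥0 := fun p => ‖fderiv ℝ v p (1, 0)‖₊ with hg0_def
  set g1 : ℝ × ℝ → ℝ≥0 := fun p => ‖fderiv ℝ v p (0, 1)‖₊ with hg1_def
  set h : ℝ × ℝ → ℝ≥0 := fun p => 2 * ‖u (phiE p)‖₊ * ‖fderiv ℝ u (phiE p)‖₊ with hh_def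
  -- continuity / measurability
  have hfvcont : Continuous (fderiv ℝ v) := hv.continuous_fderiv one_ne_zero
  have hg0cont : Continuous g0 := (hfvcont.clm_apply continuous_const).nnnorm
  have hg1cont : Continuous g1 := (hfvcont.clm_apply continuous_const).nnnorm
  have hhcont : Continuous h := by
    apply Continuous.mul
    · exact (continuous_const.mul ((hucont.comp phiE.continuous).nnnorm))
    · exact (hDcont.comp phiE.continuous).nnnorm
  have hm0 : Measurable fun p => (g0 p : ℝ≥0∞) := hg0cont.measurable.coe_nnreal_ennreal
  have hm1 : Measurable fun p => (g1 p : ℝ≥0∞) := hg1cont.measurable.coe_nnreal_ennreal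
  have hmh : Measurable fun p => (h p : ℝ≥0∞) := hhcont.measurable.coe_nnreal_ennreal
  -- pointwise bound in ℝ≥0
  have hsq : ∀ p : ℝ × ℝ, g0 p ^ 2 + g1 p ^ 2 ≤ h p ^ 2 := by
    intro p
    rw [← NNReal.coe_le_coe]
    push_cast [hg0_def, hg1_def, hh_def, coe_nnnorm]
    rw [hfvd p (1, 0), hfvd p (0, 1), phiE_e0, phiE_e1]
    have hb := pointwise_bound u hu (phiE p)
    simpa [Real.norm_eq_abs, sq_abs] using hb
  -- the pointwise Cauchy-Schwarz combination
  have hpt : ∀ x y : ℝ × ℝ,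
      (g1 x : ℝ≥0∞) * g0 y + (g0 x : ℝ≥0∞) * g1 y ≤ (h x : ℝ≥0∞) * h y := by
    intro x y
    rw [← ENNReal.coe_mul, ← ENNReal.coe_mul, ← ENNReal.coe_add, ← ENNReal.coe_mul,
      ENNReal.coe_le_coe]
    refine nnreal_cs (g1 x) (g0 x) (g1 y) (g0 y) (h x) (h y) ?_ ?_
    · rw [add_comm]; exact hsq x
    · rw [add_comm]; exact hsq y
  -- change variables for the L² norms
  have hmeas2u : Measurable fun x : EuclideanSpace ℝ (Fin 2) => (‖u x‖₊ : ℝ≥0∞) ^ 2 :=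
    (hucont.measurable.nnnorm.coe_nnreal_ennreal).pow_const 2
  have hmeas2D : Measurable fun x : EuclideanSpace ℝ (Fin 2) => (‖fderiv ℝ u x‖₊ : ℝ≥0∞) ^ 2 :=
    (hDcont.measurable.nnnorm.coe_nnreal_ennreal).pow_const 2
  have hI2' : ∫⁻ p, (‖u (phiE p)‖₊ : ℝ≥0∞) ^ 2 = I2 := phiE_mp.lintegral_comp hmeas2u
  have hJ2' : ∫⁻ p, (‖fderiv ℝ u (phiE p)‖₊ : ℝ≥0∞) ^ 2 = J2 := phiE_mp.lintegral_comp hmeas2D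
  -- Step 3 : Hölder
  have key3 : ∫⁻ p, (h p : ℝ≥0∞) ≤ 2 * I2 ^ ((1 : ℝ)/2) * J2 ^ ((1 : ℝ)/2) := by
    have hint : ∫⁻ p, (h p : ℝ≥0∞)
        = 2 * ∫⁻ p, ((‖u (phiE p)‖₊ : ℝ≥0∞) * (‖fderiv ℝ u (phiE p)‖₊ : ℝ≥0∞)) := by
      rw [← lintegral_const_mul' _ _ (by norm_num : (2 : ℝ≥0∞) ≠ ⊤)]
      refine lintegral_congr fun p => ?_
      rw [hh_def]
      push_cast
      ring
    rw [hint]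
    have hpq : Real.HolderConjugate 2 2 := ⟨by norm_num, by norm_num, by norm_num⟩
    have hfa : AEMeasurable (fun p => (‖u (phiE p)‖₊ : ℝ≥0∞)) volume :=
      ((hucont.comp phiE.continuous).measurable.nnnorm.coe_nnreal_ennreal).aemeasurable
    have hga : AEMeasurable (fun p => (‖fderiv ℝ u (phiE p)‖₊ : ℝ≥0∞)) volume :=
      ((hDcont.comp phiE.continuous).measurable.nnnorm.coe_nnreal_ennreal).aemeasurable
    have hH := ENNReal.lintegral_mul_le_Lp_mul_Lq volume hpq hfa hga
    have hr : ∀ f : (ℝ × ℝ) → ℝ≥0∞, (∫⁻ p, f p ^ (2:ℝ)) = ∫⁻ p, f p ^ (2:ℕ) := by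
      intro f
      refine lintegral_congr fun p => ?_
      rw [← ENNReal.rpow_natCast (f p) 2]
      norm_num
    rw [hr, hr, hI2', hJ2'] at hH
    calc 2 * ∫⁻ p, ((‖u (phiE p)‖₊ : ℝ≥0∞) * (‖fderiv ℝ u (phiE p)‖₊ : ℝ≥0∞))
        ≤ 2 * (I2 ^ ((1:ℝ)/2) * J2 ^ ((1:ℝ)/2)) := by
          gcongr
          exact hH
      _ = 2 * I2 ^ ((1:ℝ)/2) * J2 ^ ((1:ℝ)/2) := by ring
  -- Step 1 : FTC + product structure
  have hF1 : Measurable fun a : ℝ => ∫⁻ t, (g1 (a, t) : ℝ≥0∞) :=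
    Measurable.lintegral_prod_right (f := fun a t => (g1 (a, t) : ℝ≥0∞)) hm1
  have hF0 : Measurable fun b : ℝ => ∫⁻ t, (g0 (t, b) : ℝ≥0∞) :=
    Measurable.lintegral_prod_left (f := fun t b => (g0 (t, b) : ℝ≥0∞)) hm0
  have step1 : ∫⁻ p : ℝ × ℝ, ((‖v p‖₊ : ℝ≥0∞)) ^ 2
      ≤ (∫⁻ p, (g1 p : ℝ≥0∞)) * ∫⁻ p, (g0 p : ℝ≥0∞) := by
    calc ∫⁻ p : ℝ × ℝ, ((‖v p‖₊ : ℝ≥0∞)) ^ 2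
        ≤ ∫⁻ p : ℝ × ℝ, (∫⁻ t, (g1 (p.1, t) : ℝ≥0∞)) * ∫⁻ t, (g0 (t, p.2) : ℝ≥0∞) := by
          refine lintegral_mono fun p => ?_
          rw [sq]
          refine mul_le_mul' ?_ ?_
          · have hftc := ftc_right v hv hvsupp p.1 p.2
            simpa [hg1_def] using hftc
          · have hftc := ftc_left v hv hvsupp p.1 p.2
            simpa [hg0_def] using hftc
      _ = (∫⁻ a, ∫⁻ t, (g1 (a, t) : ℝ≥0∞)) * ∫⁻ b, ∫⁻ t, (g0 (t, b) : ℝ≥0∞) := by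
          rw [Measure.volume_eq_prod]
          exact lintegral_prod_mul hF1.aemeasurable hF0.aemeasurable
      _ = (∫⁻ p, (g1 p : ℝ≥0∞)) * ∫⁻ p, (g0 p : ℝ≥0∞) := by
          congr 1
          · rw [Measure.volume_eq_prod]
            exact (lintegral_prod _ hm1.aemeasurable).symm
          · rw [Measure.volume_eq_prod]
            exact (lintegral_prod_symm _ hm0.aemeasurable).symm
  -- Step 2 : symmetrization
  have hprod : ∀ (f g : ℝ × ℝ → ℝ≥0), Measurable (fun p => (f p : ℝ≥0∞)) →
      Measurable (fun p => (g p : ℝ≥0∞)) →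
      (∫⁻ p, (f p : ℝ≥0∞)) * (∫⁻ p, (g p : ℝ≥0∞))
        = ∫⁻ z : (ℝ × ℝ) × (ℝ × ℝ), (f z.1 : ℝ≥0∞) * (g z.2 : ℝ≥0∞)
            ∂((volume : Measure (ℝ × ℝ)).prod volume) :=
    fun f g hf hg => (lintegral_prod_mul hf.aemeasurable hg.aemeasurable).symm
  have step2 : 2 * ((∫⁻ p, (g1 p : ℝ≥0∞)) * ∫⁻ p, (g0 p : ℝ≥0∞))
      ≤ (∫⁻ p, (h p : ℝ≥0∞)) ^ 2 := by
    have he : 2 * ((∫⁻ p, (g1 p : ℝ≥0∞)) * ∫⁻ p, (g0 p : ℝ≥0∞))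
        = ∫⁻ z : (ℝ × ℝ) × (ℝ × ℝ), ((g1 z.1 : ℝ≥0∞) * g0 z.2 + (g0 z.1 : ℝ≥0∞) * g1 z.2)
            ∂((volume : Measure (ℝ × ℝ)).prod volume) := by
      have hmz : Measurable fun z : (ℝ × ℝ) × (ℝ × ℝ) => (g1 z.1 : ℝ≥0∞) * g0 z.2 :=
        (hm1.comp measurable_fst).mul (hm0.comp measurable_snd)
      rw [lintegral_add_left hmz]
      rw [← hprod g1 g0 hm1 hm0, ← hprod g0 g1 hm0 hm1]
      ring
    rw [he, sq, hprod h h hmh hmh]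
    exact lintegral_mono fun z => hpt z.1 z.2
  -- assembling everything
  have hrpow : ∀ X : ℝ≥0∞, (X ^ ((1 : ℝ)/2)) ^ (2 : ℕ) = X := by
    intro X
    rw [← ENNReal.rpow_natCast (X ^ ((1 : ℝ)/2)) 2, ← ENNReal.rpow_mul]
    norm_num
  have i4v : ∫⁻ x, (‖u x‖₊ : ℝ≥0∞) ^ 4 = ∫⁻ p, ((‖v p‖₊ : ℝ≥0∞)) ^ 2 := by
    have hmeas4 : Measurable fun x : EuclideanSpace ℝ (Fin 2) => (‖u x‖₊ : ℝ≥0∞) ^ 4 :=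
      (hucont.measurable.nnnorm.coe_nnreal_ennreal).pow_const 4
    rw [← phiE_mp.lintegral_comp hmeas4]
    refine lintegral_congr fun p => ?_
    have hvp : (‖v p‖₊ : ℝ≥0∞) = (‖u (phiE p)‖₊ : ℝ≥0∞) ^ 2 := by
      rw [hv_def]
      push_cast [nnnorm_pow, nnnorm_norm]
      ring
    rw [hvp, ← pow_mul]
  have hfin : 2 * ∫⁻ x, (‖u x‖₊ : ℝ≥0∞) ^ 4 ≤ 2 * (2 * (I2 * J2)) := by
    calc 2 * ∫⁻ x, (‖u x‖₊ : ℝ≥0∞) ^ 4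
        ≤ 2 * ((∫⁻ p, (g1 p : ℝ≥0∞)) * ∫⁻ p, (g0 p : ℝ≥0∞)) := by
          rw [i4v]
          exact mul_le_mul_right step1 2
      _ ≤ (∫⁻ p, (h p : ℝ≥0∞)) ^ 2 := step2
      _ ≤ (2 * I2 ^ ((1 : ℝ)/2) * J2 ^ ((1 : ℝ)/2)) ^ 2 := by
          gcongr
      _ = 2 * (2 * (I2 * J2)) := by
          rw [mul_pow, mul_pow, hrpow I2, hrpow J2]
          ring
  have h2 : (2 : ℝ≥0∞) ≠ 0 := by norm_num
  have h2' : (2 : ℝ≥0∞) ≠ ⊤ := by norm_num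
  calc ∫⁻ x, (‖u x‖₊ : ℝ≥0∞) ^ 4 ≤ 2 * (I2 * J2) := (ENNReal.mul_le_mul_iff_right h2 h2').1 hfin
    _ = 2 * I2 * J2 := (mul_assoc 2 I2 J2).symm


end LadyAux

/-- Ladyzhenskaya inequality in 2d: for a compactly supported C¹ vector field
`u : ℝ² → ℝ²`, `‖u‖_{L⁴} ≤ 2^{1/4} ‖u‖_{L²}^{1/2} ‖∇u‖_{L²}^{1/2}`. -/
theorem ladyzhenskaya_2d
    (u : EuclideanSpace ℝ (Fin 2) → EuclideanSpace ℝ (Fin 2))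
    (hu : ContDiff ℝ 1 u) (hsupp : HasCompactSupport u) :
    (eLpNorm u 4 volume).toReal ≤
      (2 : ℝ) ^ ((1 : ℝ) / 4) *
        (eLpNorm u 2 volume).toReal ^ ((1 : ℝ) / 2) *
        (eLpNorm (fun x => ‖fderiv ℝ u x‖) 2 volume).toReal ^ ((1 : ℝ) / 2) := by
  have hucont : Continuous u := hu.continuous
  have hDcont : Continuous (fderiv ℝ u) := hu.continuous_fderiv one_ne_zero
  set A := ∫⁻ x, (‖u x‖₊ : ℝ≥0∞) ^ 4 with hA_def
  set B := ∫⁻ x, (‖u x‖₊ : ℝ≥0∞) ^ 2 with hB_def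
  set C := ∫⁻ x, (‖fderiv ℝ u x‖₊ : ℝ≥0∞) ^ 2 with hC_def
  have hcore : A ≤ 2 * B * C := ladyzhenskaya_core u hu hsupp
  -- finiteness
  have hBfin : B ≠ ⊤ := by
    have hint : Integrable (fun x => ‖u x‖ ^ 2) volume := by
      apply Continuous.integrable_of_hasCompactSupport (hucont.norm.pow 2)
      have hc := hsupp.comp_left (g := fun y : EuclideanSpace ℝ (Fin 2) => ‖y‖ ^ 2) (by simp)
      exact hc
    have h2 := hint.2
    rw [HasFiniteIntegral] at h2
    have heq : ∫⁻ x, (‖(‖u x‖ ^ 2 : ℝ)‖₊ : ℝ≥0∞) = B := by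
      refine lintegral_congr fun x => ?_
      push_cast [nnnorm_pow, nnnorm_norm]
      ring
    rw [← heq]
    exact h2.ne
  have hCfin : C ≠ ⊤ := by
    have hint : Integrable (fun x => ‖fderiv ℝ u x‖ ^ 2) volume := by
      apply Continuous.integrable_of_hasCompactSupport (hDcont.norm.pow 2)
      have hc := (hsupp.fderiv ℝ).comp_left
        (g := fun y : EuclideanSpace ℝ (Fin 2) →L[ℝ] EuclideanSpace ℝ (Fin 2) => ‖y‖ ^ 2)
        (by simp)
      exact hc
    have h2 := hint.2
    rw [HasFiniteIntegral] at h2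
    have heq : ∫⁻ x, (‖(‖fderiv ℝ u x‖ ^ 2 : ℝ)‖₊ : ℝ≥0∞) = C := by
      refine lintegral_congr fun x => ?_
      push_cast [nnnorm_pow, nnnorm_norm]
      ring
    rw [← heq]
    exact h2.ne
  -- rewriting the eLpNorms
  have h4 : eLpNorm u 4 volume = A ^ ((1 : ℝ) / 4) := by
    rw [eLpNorm_eq_lintegral_rpow_enorm_toReal (by norm_num) (by norm_num)]
    have ht : (4 : ℝ≥0∞).toReal = (4 : ℝ) := by simp
    rw [ht, hA_def]
    congr 1
    refine lintegral_congr fun x => ?_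
    rw [← ENNReal.rpow_natCast (‖u x‖₊ : ℝ≥0∞) 4]
    norm_num
    rfl
  have h2 : eLpNorm u 2 volume = B ^ ((1 : ℝ) / 2) := by
    rw [eLpNorm_eq_lintegral_rpow_enorm_toReal (by norm_num) (by norm_num)]
    have ht : (2 : ℝ≥0∞).toReal = (2 : ℝ) := by simp
    rw [ht, hB_def]
    congr 1
    refine lintegral_congr fun x => ?_
    rw [← ENNReal.rpow_natCast (‖u x‖₊ : ℝ≥0∞) 2]
    norm_num
    rfl
  have hD : eLpNorm (fun x => ‖fderiv ℝ u x‖) 2 volume = C ^ ((1 : ℝ) / 2) := by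
    rw [eLpNorm_eq_lintegral_rpow_enorm_toReal (by norm_num) (by norm_num)]
    have ht : (2 : ℝ≥0∞).toReal = (2 : ℝ) := by simp
    rw [ht, hC_def]
    congr 1
    refine lintegral_congr fun x => ?_
    rw [enorm_norm, ← ENNReal.rpow_natCast (‖fderiv ℝ u x‖₊ : ℝ≥0∞) 2]
    norm_num
    rfl
  -- ENNReal-level inequality
  have hmain : A ^ ((1 : ℝ) / 4) ≤
      (2 : ℝ≥0∞) ^ ((1 : ℝ) / 4) * B ^ ((1 : ℝ) / 4) * C ^ ((1 : ℝ) / 4) := by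
    calc A ^ ((1 : ℝ) / 4) ≤ (2 * B * C) ^ ((1 : ℝ) / 4) :=
          ENNReal.rpow_le_rpow hcore (by norm_num)
      _ = (2 : ℝ≥0∞) ^ ((1 : ℝ) / 4) * B ^ ((1 : ℝ) / 4) * C ^ ((1 : ℝ) / 4) := by
          rw [ENNReal.mul_rpow_of_nonneg _ _ (by norm_num : (0:ℝ) ≤ 1/4),
            ENNReal.mul_rpow_of_nonneg _ _ (by norm_num : (0:ℝ) ≤ 1/4)]
  have hRfin : (2 : ℝ≥0∞) ^ ((1 : ℝ) / 4) * B ^ ((1 : ℝ) / 4) * C ^ ((1 : ℝ) / 4) ≠ ⊤ := by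
    apply ENNReal.mul_ne_top
    apply ENNReal.mul_ne_top
    · exact ENNReal.rpow_ne_top_of_nonneg (by norm_num) (by norm_num)
    · exact ENNReal.rpow_ne_top_of_nonneg (by norm_num) hBfin
    · exact ENNReal.rpow_ne_top_of_nonneg (by norm_num) hCfin
  have hmono := ENNReal.toReal_mono hRfin hmain
  rw [h4, h2, hD]
  refine le_trans hmono (le_of_eq ?_)
  rw [ENNReal.toReal_mul, ENNReal.toReal_mul]
  have e1 : ((2 : ℝ≥0∞) ^ ((1 : ℝ) / 4)).toReal = (2 : ℝ) ^ ((1 : ℝ) / 4) := by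
    rw [← ENNReal.toReal_rpow]
    norm_num
  have e2 : ∀ X : ℝ≥0∞, (X ^ ((1 : ℝ) / 2)).toReal ^ ((1 : ℝ) / 2) = (X ^ ((1 : ℝ) / 4)).toReal := by
    intro X
    rw [← ENNReal.toReal_rpow, ← ENNReal.toReal_rpow,
      ← Real.rpow_mul ENNReal.toReal_nonneg]
    norm_num
  rw [e1, e2, e2]
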